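/- arXiv:2001.09146 — 5 statements merged into one kernel-verified Lean document; each statement's English description precedes it below -/
import Mathlib

section
/- With unit server rates and recovery sets of size at most 2, the service capacity (the maximum of Σ_i λ_i over servable demand vectors λ) equals the fractional matching number of the graph representation of the code. -/
open Finset

/-- A demand vector `lam` is servable by the coded storage system with recovery
sets `R` and server rates `μ` if the requests can be split over recovery sets
without exceeding any server's rate. -/
def Servable (k n : ℕ) (t : Fin k → ℕ) (R : (i : Fin k) → Fin (t i) → Finset (Fin n))
    (μ : Fin n → ℝ) (lam : Fin k → ℝ) : Prop :=
  ∃ x : (i : Fin k) → Fin (t i) → ℝ,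
    (∀ i j, 0 ≤ x i j) ∧ (∀ i, ∑ j, x i j = lam i) ∧
    ∀ l, (∑ i, ∑ j, if l ∈ R i j then x i j else 0) ≤ μ l

/-- A fractional matching in the graph representation of the code: a value in
`[0,1]` on each edge (recovery set), with total value at most `1` at each
non-dummy vertex (server). -/
def IsFracMatching (k n : ℕ) (t : Fin k → ℕ)
    (R : (i : Fin k) → Fin (t i) → Finset (Fin n))
    (x : (i : Fin k) → Fin (t i) → ℝ) : Prop :=
  (∀ i j, 0 ≤ x i j ∧ x i j ≤ 1) ∧
  ∀ l : Fin n, (∑ i, ∑ j, if l ∈ R i j then x i j else 0) ≤ 1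


theorem service_capacity_eq_frac_matching_number (k n : ℕ) (t : Fin k → ℕ)
    (R : (i : Fin k) → Fin (t i) → Finset (Fin n))
    (hcard : ∀ i j, (R i j).Nonempty ∧ (R i j).card ≤ 2) :
    sSup {s : ℝ | ∃ lam : Fin k → ℝ, Servable k n t R (fun _ => 1) lam ∧ s = ∑ i, lam i} =
      sSup {s : ℝ | ∃ x : (i : Fin k) → Fin (t i) → ℝ,
        IsFracMatching k n t R x ∧ s = ∑ i, ∑ j, x i j} := by
  congr 1
  ext s
  constructor
  · rintro ⟨lam, ⟨x, hpos, hsum, hload⟩, rfl⟩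
    refine ⟨x, ⟨fun i j => ⟨hpos i j, ?_⟩, fun l => hload l⟩, ?_⟩
    · obtain ⟨l, hl⟩ := (hcard i j).1
      have h1 : x i j ≤ ∑ j', if l ∈ R i j' then x i j' else 0 := by
        have := Finset.single_le_sum (f := fun j' => if l ∈ R i j' then x i j' else 0)
          (fun j' _ => by by_cases h : l ∈ R i j' <;> simp [h, hpos]) (Finset.mem_univ j)
        simpa [hl] using this
      have h2 : (∑ j', if l ∈ R i j' then x i j' else 0)
          ≤ ∑ i', ∑ j', if l ∈ R i' j' then x i' j' else 0 :=
        Finset.single_le_sum (f := fun i' => ∑ j', if l ∈ R i' j' then x i' j' else 0)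
          (fun i' _ => Finset.sum_nonneg fun j' _ => by
            by_cases h : l ∈ R i' j' <;> simp [h, hpos]) (Finset.mem_univ i)
      exact h1.trans (h2.trans (hload l))
    · exact Finset.sum_congr rfl fun i _ => (hsum i).symm
  · rintro ⟨x, ⟨hbd, hload⟩, rfl⟩
    exact ⟨fun i => ∑ j, x i j, ⟨x, fun i j => (hbd i j).1, fun i => rfl, hload⟩, rfl⟩
end

section
/- With unit server rates and recovery sets of size at most 2, the service capacity λ* of the coded storage system satisfies m(G) ≤ λ* ≤ v(G), where m(G) is the matching number and v(G) is the vertex cover number (covers consisting of non-dummy vertices) of the graph representation of the code. -/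
open Finset

theorem matching_le_capacity_le_cover (k n : ℕ) (t : Fin k → ℕ)
    (R : (i : Fin k) → Fin (t i) → Finset (Fin n))
    (hcard : ∀ i j, (R i j).Nonempty ∧ (R i j).card ≤ 2)
    (M : Finset ((i : Fin k) × Fin (t i)))
    (hM : ∀ e ∈ M, ∀ e' ∈ M, e ≠ e' → Disjoint (R e.1 e.2) (R e'.1 e'.2))
    (C : Finset (Fin n))
    (hC : ∀ i j, ∃ l ∈ C, l ∈ R i j) :
    (M.card : ℝ) ≤
        sSup {s : ℝ | ∃ lam : Fin k → ℝ, Servable k n t R (fun _ => 1) lam ∧ s = ∑ i, lam i} ∧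
      sSup {s : ℝ | ∃ lam : Fin k → ℝ, Servable k n t R (fun _ => 1) lam ∧ s = ∑ i, lam i} ≤
        (C.card : ℝ) := by
  set S := {s : ℝ | ∃ lam : Fin k → ℝ, Servable k n t R (fun _ => 1) lam ∧ s = ∑ i, lam i}
  -- every element of S is at most C.card
  have hub : ∀ s ∈ S, s ≤ (C.card : ℝ) := by
    rintro s ⟨lam, ⟨x, hx0, hxsum, hload⟩, rfl⟩
    have key : ∀ i j, x i j ≤ ∑ l ∈ C, if l ∈ R i j then x i j else 0 := by
      intro i j
      obtain ⟨l, hlC, hlR⟩ := hC i j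
      calc x i j = if l ∈ R i j then x i j else 0 := by simp [hlR]
        _ ≤ ∑ l ∈ C, if l ∈ R i j then x i j else 0 :=
            Finset.single_le_sum (f := fun l => if l ∈ R i j then x i j else 0)
              (fun l _ => by split_ifs; exacts [hx0 i j, le_rfl]) hlC
    calc ∑ i, lam i = ∑ i, ∑ j, x i j := by
            exact Finset.sum_congr rfl fun i _ => (hxsum i).symm
      _ ≤ ∑ i, ∑ j, ∑ l ∈ C, if l ∈ R i j then x i j else 0 := by
            exact Finset.sum_le_sum fun i _ => Finset.sum_le_sum fun j _ => key i j
      _ = ∑ l ∈ C, ∑ i, ∑ j, if l ∈ R i j then x i j else 0 := by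
            rw [Finset.sum_comm]
            exact Finset.sum_congr rfl fun i _ => Finset.sum_comm
      _ ≤ ∑ l ∈ C, 1 := Finset.sum_le_sum fun l _ => hload l
      _ = (C.card : ℝ) := by simp
  -- M.card is in S
  have hmem : (M.card : ℝ) ∈ S := by
    refine ⟨fun i => ∑ j, if (⟨i, j⟩ : (i : Fin k) × Fin (t i)) ∈ M then (1 : ℝ) else 0,
      ⟨fun i j => if (⟨i, j⟩ : (i : Fin k) × Fin (t i)) ∈ M then (1 : ℝ) else 0,
        fun i j => by positivity, fun i => rfl, ?_⟩, ?_⟩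
    · intro l
      have : ∀ i j, (if l ∈ R i j then (if (⟨i, j⟩ : (i : Fin k) × Fin (t i)) ∈ M then (1:ℝ) else 0) else 0)
          = if (⟨i, j⟩ : (i : Fin k) × Fin (t i)) ∈ M.filter (fun e => l ∈ R e.1 e.2) then (1:ℝ) else 0 := by
        intro i j
        simp only [Finset.mem_filter]
        by_cases h1 : l ∈ R i j <;> by_cases h2 : (⟨i, j⟩ : (i : Fin k) × Fin (t i)) ∈ M <;>
          simp [h1, h2]
      simp only [this]
      have hsig : (∑ i, ∑ j, if (⟨i, j⟩ : (i : Fin k) × Fin (t i)) ∈ M.filter (fun e => l ∈ R e.1 e.2) then (1:ℝ) else 0)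
          = ∑ e : (i : Fin k) × Fin (t i), if e ∈ M.filter (fun e => l ∈ R e.1 e.2) then (1:ℝ) else 0 := by
        rw [← Finset.univ_sigma_univ, Finset.sum_sigma]
      rw [hsig, Finset.sum_ite_mem, Finset.univ_inter, Finset.sum_const]
      have hcard1 : (M.filter (fun e => l ∈ R e.1 e.2)).card ≤ 1 := by
        rw [Finset.card_le_one]
        intro a ha b hb
        simp only [Finset.mem_filter] at ha hb
        by_contra hne
        exact (Finset.disjoint_left.mp (hM a ha.1 b hb.1 hne) ha.2) hb.2
      simp only [nsmul_eq_mul, mul_one]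
      exact_mod_cast hcard1
    · symm
      have h2 : (∑ e ∈ (univ : Finset (Fin k)).sigma (fun i => (univ : Finset (Fin (t i)))),
          if e ∈ M then (1:ℝ) else 0) = (M.card : ℝ) := by
        rw [Finset.univ_sigma_univ, Finset.sum_ite_mem, Finset.univ_inter, Finset.sum_const]
        simp
      rw [← h2, Finset.sum_sigma]
  have hbdd : BddAbove S := ⟨(C.card : ℝ), hub⟩
  exact ⟨le_csSup hbdd hmem, csSup_le ⟨_, hmem⟩ hub⟩
end

section
/- In a finite bipartite graph, the maximum value of a fractional matching equals the matching number: m_f(G) = m(G). -/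
open Finset

/-- A matching in a simple graph: a set of pairwise vertex-disjoint edges. -/
def GraphMatching {V : Type} [Fintype V] [DecidableEq V] (G : SimpleGraph V)
    [DecidableRel G.Adj] (M : Finset (Sym2 V)) : Prop :=
  M ⊆ G.edgeFinset ∧ ∀ e ∈ M, ∀ e' ∈ M, e ≠ e' → ∀ v : V, v ∈ e → v ∉ e'

/-- A fractional matching: values in `[0,1]` on edges with total at most `1`
at every vertex. -/
def GraphFracMatching {V : Type} [Fintype V] [DecidableEq V] (G : SimpleGraph V)
    [DecidableRel G.Adj] (x : Sym2 V → ℝ) : Prop :=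
  (∀ e, 0 ≤ x e ∧ x e ≤ 1) ∧ (∀ e ∉ G.edgeFinset, x e = 0) ∧
    ∀ v : V, (∑ e ∈ G.edgeFinset, if v ∈ e then x e else 0) ≤ 1

/-- A vertex cover: a set of vertices meeting every edge. -/
def GraphVertexCover {V : Type} [Fintype V] [DecidableEq V] (G : SimpleGraph V)
    [DecidableRel G.Adj] (C : Finset V) : Prop :=
  ∀ e ∈ G.edgeFinset, ∃ v ∈ C, v ∈ e

section Aux
variable {V : Type} [Fintype V] [DecidableEq V] (G : SimpleGraph V) [DecidableRel G.Adj]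

-- sum rewrite
lemma sumW (x : Sym2 V → ℝ) (S : Finset V) :
    ∑ v ∈ S, (∑ e ∈ G.edgeFinset, if v ∈ e then x e else 0)
      = ∑ e ∈ G.edgeFinset, ((S.filter (· ∈ e)).card : ℝ) * x e := by
  rw [Finset.sum_comm]
  refine Finset.sum_congr rfl fun e _ => ?_
  rw [← Finset.sum_filter, Finset.sum_const, nsmul_eq_mul]

variable (c : G.Coloring (Fin 2))

-- exactly one endpoint of each edge is in the 0-color class
lemma one_endpoint (e : Sym2 V) (he : e ∈ G.edgeFinset) :
    (((univ.filter (fun v => c v = 0)).filter (· ∈ e)).card) = 1 := by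
  induction e with
  | _ u v =>
    rw [SimpleGraph.mem_edgeFinset, SimpleGraph.mem_edgeSet] at he
    have hne : c u ≠ c v := c.valid he
    have h2 : ∀ i : Fin 2, i = 0 ∨ i = 1 := by decide
    rcases h2 (c u) with hu | hu <;> rcases h2 (c v) with hv | hv
    · exact absurd (hu.trans hv.symm) hne
    · have : ((univ.filter (fun v => c v = 0)).filter (· ∈ s(u, v))) = {u} := by
        ext a
        simp only [Finset.mem_filter, Finset.mem_univ, true_and, Sym2.mem_iff,
          Finset.mem_singleton]
        constructor
        · rintro ⟨ha, rfl | rfl⟩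
          · rfl
          · rw [hv] at ha; exact absurd ha (by decide)
        · rintro rfl; exact ⟨hu, Or.inl rfl⟩
      rw [this, Finset.card_singleton]
    · have : ((univ.filter (fun v => c v = 0)).filter (· ∈ s(u, v))) = {v} := by
        ext a
        simp only [Finset.mem_filter, Finset.mem_univ, true_and, Sym2.mem_iff,
          Finset.mem_singleton]
        constructor
        · rintro ⟨ha, rfl | rfl⟩
          · rw [hu] at ha; exact absurd ha (by decide)
          · rfl
        · rintro rfl; exact ⟨hv, Or.inr rfl⟩
      rw [this, Finset.card_singleton]
    · exact absurd (hu.trans hv.symm) hne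

end Aux

section Aux2
variable {V : Type} [Fintype V] [DecidableEq V] (G : SimpleGraph V) [DecidableRel G.Adj]
variable (c : G.Coloring (Fin 2))

lemma frac_le (x : Sym2 V → ℝ) (hx : GraphFracMatching G x) (S : Finset V)
    (hS : S ⊆ univ.filter (fun v => c v = 0)) :
    ∑ e ∈ G.edgeFinset, x e ≤ ((S.biUnion (fun a => G.neighborFinset a)).card : ℝ)
      + (univ.filter (fun v => c v = 0)).card - S.card := by
  set A := univ.filter (fun v => c v = 0) with hA
  set N := S.biUnion (fun a => G.neighborFinset a) with hN
  set W : V → ℝ := fun v => ∑ e ∈ G.edgeFinset, if v ∈ e then x e else 0 with hWdef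
  have hW1 : ∀ v, W v ≤ 1 := hx.2.2
  have hW0 : ∀ v, 0 ≤ W v := fun v =>
    Finset.sum_nonneg fun e _ => by split; exacts [(hx.1 e).1, le_refl 0]
  have htot : ∑ v ∈ A, W v = ∑ e ∈ G.edgeFinset, x e := by
    rw [hWdef, sumW]
    refine Finset.sum_congr rfl fun e he => ?_
    rw [one_endpoint G c e he]
    norm_num
  have hsplit : ∑ v ∈ A \ S, W v + ∑ v ∈ S, W v = ∑ v ∈ A, W v :=
    Finset.sum_sdiff hS
  have hAS : ∑ v ∈ A \ S, W v ≤ ((A.card : ℝ) - S.card) := by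
    calc ∑ v ∈ A \ S, W v ≤ (A \ S).card • (1:ℝ) :=
          Finset.sum_le_card_nsmul _ _ _ fun v _ => hW1 v
      _ = ((A.card : ℝ) - S.card) := by
          rw [nsmul_eq_mul, mul_one, Finset.card_sdiff_of_subset hS]
          rw [Nat.cast_sub (Finset.card_le_card hS)]
  have hcoef : ∀ e ∈ G.edgeFinset,
      ((S.filter (· ∈ e)).card : ℝ) ≤ ((N.filter (· ∈ e)).card : ℝ) := by
    intro e he
    rcases (S.filter (· ∈ e)).eq_empty_or_nonempty with h0 | ⟨a, ha⟩
    · simp [h0]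
    · have hle : (S.filter (· ∈ e)).card ≤ 1 := by
        calc (S.filter (· ∈ e)).card ≤ (A.filter (· ∈ e)).card :=
              Finset.card_le_card (Finset.filter_subset_filter _ hS)
          _ = 1 := one_endpoint G c e he
      have : (N.filter (· ∈ e)).Nonempty := by
        rw [Finset.mem_filter] at ha
        obtain ⟨haS, hae⟩ := ha
        induction e with
        | _ u v =>
          rw [SimpleGraph.mem_edgeFinset, SimpleGraph.mem_edgeSet] at he
          rcases Sym2.mem_iff.mp hae with rfl | rfl
          · exact ⟨v, Finset.mem_filter.mpr ⟨Finset.mem_biUnion.mpr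
              ⟨a, haS, (G.mem_neighborFinset _ _).mpr he⟩, Sym2.mem_mk_right _ _⟩⟩
          · exact ⟨u, Finset.mem_filter.mpr ⟨Finset.mem_biUnion.mpr
              ⟨a, haS, (G.mem_neighborFinset _ _).mpr he.symm⟩, Sym2.mem_mk_left _ _⟩⟩
      have h1 : 1 ≤ (N.filter (· ∈ e)).card := Finset.card_pos.mpr this
      exact_mod_cast le_trans hle h1
  have hSN : ∑ v ∈ S, W v ≤ ∑ v ∈ N, W v := by
    rw [hWdef, sumW, sumW]
    refine Finset.sum_le_sum fun e he => ?_
    exact mul_le_mul_of_nonneg_right (hcoef e he) (hx.1 e).1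
  have hNcard : ∑ v ∈ N, W v ≤ (N.card : ℝ) := by
    calc ∑ v ∈ N, W v ≤ N.card • (1:ℝ) :=
          Finset.sum_le_card_nsmul _ _ _ fun v _ => hW1 v
      _ = (N.card : ℝ) := by rw [nsmul_eq_mul, mul_one]
  linarith [hsplit, htot]

end Aux2

section Aux3
variable {V : Type} [Fintype V] [DecidableEq V] (G : SimpleGraph V) [DecidableRel G.Adj]

lemma koenig (c : G.Coloring (Fin 2)) :
    ∃ M : Finset (Sym2 V), GraphMatching G M ∧
      ∀ x, GraphFracMatching G x → ∑ e ∈ G.edgeFinset, x e ≤ (M.card : ℝ) := by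
  classical
  set A := univ.filter (fun v => c v = 0) with hA
  set nb : Finset V → Finset V := fun S => S.biUnion (fun a => G.neighborFinset a) with hnb
  set df : Finset V → ℕ := fun S => S.card - (nb S).card with hdf
  have hne : (A.powerset.image df).Nonempty :=
    ⟨df ∅, mem_image_of_mem df (mem_powerset.mpr (empty_subset _))⟩
  set d : ℕ := (A.powerset.image df).max' hne with hd
  have hdle : ∀ S ⊆ A, S.card ≤ (nb S).card + d := by
    intro S hS
    have h1 : df S ≤ d := Finset.le_max' _ _ (mem_image_of_mem df (mem_powerset.mpr hS))
    have h2 : df S = S.card - (nb S).card := rfl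
    omega
  have hS₀ : ∃ S₀ ⊆ A, (nb S₀).card + d ≤ S₀.card := by
    obtain ⟨S, hS, hdfS⟩ := Finset.mem_image.mp (Finset.max'_mem _ hne)
    have hdS : df S = d := hdfS
    have h2 : df S = S.card - (nb S).card := rfl
    by_cases h : (nb S).card ≤ S.card
    · exact ⟨S, Finset.mem_powerset.mp hS, by omega⟩
    · refine ⟨∅, Finset.empty_subset _, ?_⟩
      have hnbe : nb ∅ = ∅ := by simp [hnb]
      have hd0 : d = 0 := by omega
      simp [hnbe, hd0]
  -- Hall's theorem with d dummy vertices
  set t : ↥A → Finset (V ⊕ Fin d) :=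
    fun a => (G.neighborFinset a.1).image Sum.inl ∪ (univ : Finset (Fin d)).image Sum.inr
    with ht
  have hall : ∀ s : Finset ↥A, s.card ≤ (s.biUnion t).card := by
    intro s
    rcases s.eq_empty_or_nonempty with rfl | ⟨a₀, ha₀⟩
    · simp
    · have himg : s.image Subtype.val ⊆ A := by
        intro v hv
        obtain ⟨a, _, rfl⟩ := Finset.mem_image.mp hv
        exact a.2
      have h1 : s.biUnion t
          = (nb (s.image Subtype.val)).image Sum.inl
            ∪ (univ : Finset (Fin d)).image Sum.inr := by
        ext z
        simp only [Finset.mem_biUnion, Finset.mem_union, Finset.mem_image, ht, hnb,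
          Finset.mem_univ, true_and]
        constructor
        · rintro ⟨a, has, (⟨b, hb, rfl⟩ | ⟨j, hj, rfl⟩)⟩
          · exact Or.inl ⟨b, ⟨a.1, ⟨a, has, rfl⟩, hb⟩, rfl⟩
          · exact Or.inr ⟨j, rfl⟩
        · rintro (⟨b, ⟨w, ⟨a, has, rfl⟩, hbv⟩, rfl⟩ | ⟨j, rfl⟩)
          · exact ⟨a, has, Or.inl ⟨b, hbv, rfl⟩⟩
          · exact ⟨a₀, ha₀, Or.inr ⟨j, rfl⟩⟩
      have hdisj : Disjoint ((nb (s.image Subtype.val)).image Sum.inl)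
          ((univ : Finset (Fin d)).image Sum.inr) := by
        simp only [Finset.disjoint_left, Finset.mem_image]
        rintro z ⟨b, _, rfl⟩ ⟨j, _, h⟩
        exact Sum.inl_ne_inr h.symm
      rw [h1, Finset.card_union_of_disjoint hdisj,
        Finset.card_image_of_injective _ Sum.inl_injective,
        Finset.card_image_of_injective _ Sum.inr_injective, Finset.card_univ,
        Fintype.card_fin]
      have := hdle _ himg
      have hcs : (s.image Subtype.val).card = s.card :=
        Finset.card_image_of_injective _ Subtype.val_injective
      omega
  obtain ⟨f, hfinj, hft⟩ := (Finset.all_card_le_biUnion_card_iff_exists_injective t).mp hall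
  -- construct the matching
  set P : Finset (↥A × V) := univ.filter (fun p => f p.1 = Sum.inl p.2) with hP
  have hPnb : ∀ p ∈ P, p.2 ∈ G.neighborFinset p.1.1 := by
    intro p hp
    have hfp : f p.1 = Sum.inl p.2 := (Finset.mem_filter.mp hp).2
    have := hft p.1
    rw [hfp, ht] at this
    simp only [Finset.mem_union, Finset.mem_image] at this
    rcases this with ⟨b, hb, hbe⟩ | ⟨j, _, hj⟩
    · rwa [← Sum.inl_injective hbe]
    · exact absurd hj.symm Sum.inl_ne_inr
  have hPadj : ∀ p ∈ P, G.Adj p.1.1 p.2 := fun p hp =>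
    (G.mem_neighborFinset _ _).mp (hPnb p hp)
  have hPA : ∀ p : ↥A × V, c p.1.1 = 0 := fun p =>
    (Finset.mem_filter.mp p.1.2).2
  have hPB : ∀ p ∈ P, c p.2 ≠ 0 := by
    intro p hp h
    exact (c.valid (hPadj p hp)) ((hPA p).trans h.symm)
  have hinjP : Set.InjOn (fun p : ↥A × V => s(p.1.1, p.2)) P := by
    intro p hp q hq hpq
    simp only [Sym2.eq, Sym2.rel_iff', Prod.mk.injEq, Prod.swap_prod_mk] at hpq
    rcases hpq with ⟨h1, h2⟩ | ⟨h1, h2⟩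
    · have h1' : p.1 = q.1 := Subtype.ext h1
      exact Prod.ext h1' h2
    · exact absurd (hPA p) (h1 ▸ hPB q hq)
  set M : Finset (Sym2 V) := P.image (fun p => s(p.1.1, p.2)) with hM
  have hMcard : M.card = P.card := Finset.card_image_of_injOn hinjP
  have hPcard : A.card ≤ P.card + d := by
    have hcardA : (univ : Finset ↥A).card = A.card := by
      rw [Finset.card_univ, Fintype.card_coe]
    have hsplit := Finset.card_filter_add_card_filter_not
      (s := (univ : Finset ↥A)) (p := fun a => (f a).isLeft)
    have hleft : (univ.filter (fun a : ↥A => (f a).isLeft)).card = P.card := by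
      symm
      apply Finset.card_bij (fun p _ => p.1)
      · intro p hp
        simp only [Finset.mem_filter, Finset.mem_univ, true_and]
        rw [(Finset.mem_filter.mp hp).2]; rfl
      · intro p hp q hq hpq
        have h2 : p.2 = q.2 := by
          have := (Finset.mem_filter.mp hp).2.symm.trans
            (hpq ▸ (Finset.mem_filter.mp hq).2)
          exact Sum.inl_injective this
        exact Prod.ext hpq h2
      · intro a ha
        have := (Finset.mem_filter.mp ha).2
        obtain ⟨b, hb⟩ := Sum.isLeft_iff.mp this
        exact ⟨(a, b), Finset.mem_filter.mpr ⟨Finset.mem_univ _, hb⟩, rfl⟩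
    have hright : (univ.filter (fun a : ↥A => ¬ (f a).isLeft)).card ≤ d := by
      have : (univ.filter (fun a : ↥A => ¬ (f a).isLeft)).card
          ≤ ((univ : Finset (Fin d)).image Option.some).card := by
        apply Finset.card_le_card_of_injOn (fun a => (f a).getRight?)
        · intro a ha
          have := (Finset.mem_filter.mp ha).2
          rw [Sum.not_isLeft] at this
          obtain ⟨j, hj⟩ := Sum.isRight_iff.mp this
          dsimp only; rw [hj]
          exact Finset.mem_image.mpr ⟨j, Finset.mem_univ _, rfl⟩
        · intro a ha b hb hab
          have ha' := Sum.isRight_iff.mp (Sum.not_isLeft.mp (Finset.mem_filter.mp ha).2)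
          have hb' := Sum.isRight_iff.mp (Sum.not_isLeft.mp (Finset.mem_filter.mp hb).2)
          obtain ⟨j, hj⟩ := ha'
          obtain ⟨k, hk⟩ := hb'
          simp only [hj, hk, Sum.getRight?] at hab
          apply hfinj
          rw [hj, hk, Option.some_injective _ hab]
        
      rwa [Finset.card_image_of_injective _ (Option.some_injective _), Finset.card_univ,
        Fintype.card_fin] at this
    omega
  refine ⟨M, ⟨?_, ?_⟩, ?_⟩
  · -- M ⊆ edgeFinset
    intro e he
    obtain ⟨p, hp, rfl⟩ := Finset.mem_image.mp he
    rw [SimpleGraph.mem_edgeFinset, SimpleGraph.mem_edgeSet]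
    exact hPadj p hp
  · -- disjointness
    intro e he e' he' hee v hv hv'
    obtain ⟨p, hp, rfl⟩ := Finset.mem_image.mp he
    obtain ⟨q, hq, rfl⟩ := Finset.mem_image.mp he'
    have key : p ≠ q := fun h => hee (by rw [h])
    rcases Sym2.mem_iff.mp hv with rfl | rfl <;> rcases Sym2.mem_iff.mp hv' with h | h
    · have h1 : p.1 = q.1 := Subtype.ext h
      have h2 : p.2 = q.2 := Sum.inl_injective
        ((Finset.mem_filter.mp hp).2.symm.trans (h1.symm ▸ (Finset.mem_filter.mp hq).2))
      exact key (Prod.ext h1 h2)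
    · exact hPB q hq (h ▸ hPA p)
    · exact hPB p hp (h.symm ▸ hPA q)
    · have h1 : p.1 = q.1 := hfinj ((h ▸ (Finset.mem_filter.mp hp).2).trans
        (Finset.mem_filter.mp hq).2.symm)
      exact key (Prod.ext h1 h)
  · -- the bound
    intro x hx
    obtain ⟨S₀, hS₀A, hS₀⟩ := hS₀
    have h1 : ∑ e ∈ G.edgeFinset, x e ≤ ((nb S₀).card : ℝ) + (A.card : ℝ) - S₀.card :=
      frac_le G c x hx S₀ hS₀A
    have h2 : ((nb S₀).card : ℝ) + (A.card : ℝ) - (S₀.card : ℝ) ≤ (A.card : ℝ) - d := by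
      have : ((nb S₀).card : ℝ) + d ≤ S₀.card := by exact_mod_cast hS₀
      linarith
    have h3 : (A.card : ℝ) - d ≤ M.card := by
      rw [hMcard]
      have : (A.card : ℝ) ≤ (P.card : ℝ) + d := by exact_mod_cast hPcard
      linarith
    linarith
end Aux3

section Aux4
variable {V : Type} [Fintype V] [DecidableEq V] (G : SimpleGraph V) [DecidableRel G.Adj]

lemma matching_frac (M : Finset (Sym2 V)) (hM : GraphMatching G M) :
    GraphFracMatching G (fun e => if e ∈ M then (1:ℝ) else 0) ∧
      ∑ e ∈ G.edgeFinset, (if e ∈ M then (1:ℝ) else 0) = M.card := by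
  classical
  constructor
  · refine ⟨fun e => by dsimp only; split <;> norm_num, fun e he => by
      dsimp only; rw [if_neg (fun h => he (hM.1 h))], fun v => ?_⟩
    have heq : ∀ e ∈ G.edgeFinset,
        (if v ∈ e then (if e ∈ M then (1:ℝ) else 0) else 0)
          = if (v ∈ e ∧ e ∈ M) then (1:ℝ) else 0 := by
      intro e _
      split_ifs with h1 h2 h3 <;> simp_all
    rw [Finset.sum_congr rfl heq, Finset.sum_boole]
    have hcard : (G.edgeFinset.filter (fun e => v ∈ e ∧ e ∈ M)).card ≤ 1 := by
      rw [Finset.card_le_one]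
      intro e he e' he'
      rw [Finset.mem_filter] at he he'
      by_contra hne
      exact hM.2 e he.2.2 e' he'.2.2 hne v he.2.1 he'.2.1
    exact_mod_cast hcard
  · rw [Finset.sum_boole, Finset.filter_mem_eq_inter, Finset.inter_eq_right.mpr hM.1]

end Aux4


theorem bipartite_fracMatching_eq_matching {V : Type} [Fintype V] [DecidableEq V]
    (G : SimpleGraph V) [DecidableRel G.Adj] (hbip : G.Colorable 2) :
    sSup {s : ℝ | ∃ x, GraphFracMatching G x ∧ s = ∑ e ∈ G.edgeFinset, x e} =
      sSup {s : ℝ | ∃ M : Finset (Sym2 V), GraphMatching G M ∧ s = (M.card : ℝ)} := by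
  classical
  obtain ⟨c⟩ := hbip
  obtain ⟨M₀, hM₀, hbound⟩ := koenig G c
  set SF := {s : ℝ | ∃ x, GraphFracMatching G x ∧ s = ∑ e ∈ G.edgeFinset, x e} with hSF
  set SM := {s : ℝ | ∃ M : Finset (Sym2 V), GraphMatching G M ∧ s = (M.card : ℝ)} with hSM
  have hSFne : SF.Nonempty := by
    refine ⟨0, fun _ => 0, ⟨fun e => by norm_num, fun e _ => rfl, fun v => by simp⟩, by simp⟩
  have hM₀mem : (M₀.card : ℝ) ∈ SM := ⟨M₀, hM₀, rfl⟩
  have hSMne : SM.Nonempty := ⟨_, hM₀mem⟩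
  have hSFbdd : ∀ s ∈ SF, s ≤ (M₀.card : ℝ) := by
    rintro s ⟨x, hx, rfl⟩
    exact hbound x hx
  have hSMbdd : BddAbove SM := by
    refine ⟨(Fintype.card (Sym2 V) : ℝ), ?_⟩
    rintro s ⟨M, hM, rfl⟩
    exact_mod_cast Finset.card_le_univ M
  apply le_antisymm
  · exact csSup_le hSFne fun s hs => le_trans (hSFbdd s hs) (le_csSup hSMbdd hM₀mem)
  · apply csSup_le hSMne
    rintro s ⟨M, hM, rfl⟩
    obtain ⟨hfrac, hsum⟩ := matching_frac G M hM
    exact le_csSup ⟨(M₀.card : ℝ), fun s hs => hSFbdd s hs⟩ ⟨_, hfrac, hsum.symm⟩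
end

section
/- The service capacity of the binary simplex code [2^k − 1, k]_2 with unit server rates equals 2^{k−1}: the maximum over servable demand vectors λ of Σ_{i=1}^k λ_i is exactly 2^{k−1}. -/
open Finset

private lemma zmod2_add_self : ∀ a : ZMod 2, a + a = 0 := by decide
private lemma zmod2_cases : ∀ a : ZMod 2, a = 0 ∨ a = 1 := by decide

lemma fiber_card {k : ℕ} (hk : 1 ≤ k) (φ : (Fin k → ZMod 2) → ZMod 2)
    (hadd : ∀ x y, φ (x + y) = φ x + φ y) (u : Fin k → ZMod 2) (hu : φ u = 1) :
    (univ.filter fun x => φ x = 0).card = 2 ^ (k - 1) ∧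
    (univ.filter fun x => φ x = 1).card = 2 ^ (k - 1) := by
  have addself : ∀ x : Fin k → ZMod 2, x + x = 0 := fun x => funext fun j => zmod2_add_self (x j)
  have hswap : ∀ x : Fin k → ZMod 2, φ (x + u) = φ x + 1 := fun x => by rw [hadd, hu]
  have hinv : ∀ x : Fin k → ZMod 2, x + u + u = x := by
    intro x; rw [add_assoc, addself u, add_zero]
  have hbij : (univ.filter fun x => φ x = 0).card = (univ.filter fun x => φ x = 1).card := by
    refine Finset.card_nbij' (fun x => x + u) (fun x => x + u) ?_ ?_ ?_ ?_
    · intro a ha; simp only [mem_coe, mem_filter, mem_univ, true_and] at ha ⊢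
      rw [hswap, ha, zero_add]
    · intro a ha; simp only [mem_coe, mem_filter, mem_univ, true_and] at ha ⊢
      rw [hswap, ha]; decide
    · intro a _; exact hinv a
    · intro a _; exact hinv a
  have hone : (univ.filter fun x : Fin k → ZMod 2 => φ x = 1) =
      (univ.filter fun x => ¬ (φ x = 0)) := by
    apply filter_congr; intro x _
    rcases zmod2_cases (φ x) with h | h <;> simp [h]
  have hsum : (univ.filter fun x : Fin k → ZMod 2 => φ x = 0).card +
      (univ.filter fun x : Fin k → ZMod 2 => φ x = 1).card = 2 ^ k := by
    rw [hone, Finset.card_filter_add_card_filter_not, card_univ, Fintype.card_fun]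
    simp [ZMod.card]
  have hk' : k - 1 + 1 = k := by omega
  have h2 : 2 ^ (k - 1) * 2 = 2 ^ k := by
    rw [← pow_succ, hk']
  constructor <;> omega

/-- A demand vector `lam` is servable by the `[2^k-1, k]_2` simplex code with
unit server rates: servers are the nonzero vectors of `𝔽_2^k`, and a recovery
set for file `i` is a set of one or two servers whose stored vectors sum to
`e_i`. -/
def SimplexServable (k : ℕ) (lam : Fin k → ℝ) : Prop :=
  ∃ w : Fin k → Finset {v : Fin k → ZMod 2 // v ≠ 0} → ℝ,
    (∀ i S, 0 ≤ w i S) ∧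
    (∀ i S, w i S ≠ 0 →
      1 ≤ S.card ∧ S.card ≤ 2 ∧ ∑ v ∈ S, v.val = Pi.single i 1) ∧
    (∀ i, ∑ S : Finset {v : Fin k → ZMod 2 // v ≠ 0}, w i S = lam i) ∧
    ∀ v : {v : Fin k → ZMod 2 // v ≠ 0},
      (∑ i, ∑ S ∈ Finset.univ.filter (fun S => v ∈ S), w i S) ≤ 1

theorem simplex_service_capacity (k : ℕ) (hk : 1 ≤ k) :
    IsGreatest {s : ℝ | ∃ lam : Fin k → ℝ, SimplexServable k lam ∧ s = ∑ i, lam i}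
      (2 ^ (k - 1)) := by
  have addself : ∀ x : Fin k → ZMod 2, x + x = 0 := fun x => funext fun j => zmod2_add_self (x j)
  set i0 : Fin k := ⟨0, hk⟩ with hi0
  set e0 : Fin k → ZMod 2 := Pi.single i0 1 with he0def
  have e0i0 : e0 i0 = 1 := Pi.single_eq_same i0 1
  have e0ne : e0 ≠ 0 := by
    intro h
    have := congrFun h i0
    rw [e0i0] at this
    exact one_ne_zero this
  constructor
  · -- membership : the constructed demand
    have hne0 : ∀ x : Fin k → ZMod 2, x i0 = 0 → x + e0 ≠ 0 := by
      intro x hx h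
      have := congrFun h i0
      simp only [Pi.add_apply, hx, e0i0, zero_add, Pi.zero_apply] at this
      exact one_ne_zero this
    set g : (Fin k → ZMod 2) → Finset {v : Fin k → ZMod 2 // v ≠ 0} :=
      fun x => if hx : x ≠ 0 ∧ x i0 = 0 then
        {⟨x, hx.1⟩, ⟨x + e0, hne0 x hx.2 ⟩} else {⟨e0, e0ne⟩} with hg
    set D : Finset (Fin k → ZMod 2) := univ.filter (fun x => x i0 = 0) with hD
    set GS : Finset (Finset {v : Fin k → ZMod 2 // v ≠ 0}) := D.image g with hGS
    -- key determination lemma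
    have key : ∀ x ∈ D, ∀ v : {v : Fin k → ZMod 2 // v ≠ 0}, v ∈ g x →
        x = v.val + Pi.single i0 (v.val i0) := by
      intro x hxD v hv
      have hx0 : x i0 = 0 := (mem_filter.mp hxD).2
      simp only [hg] at hv
      by_cases hx : x ≠ 0 ∧ x i0 = 0
      · rw [dif_pos hx, mem_insert, mem_singleton] at hv
        rcases hv with hv | hv
        · have hvx : v.val = x := by rw [hv]
          rw [hvx, hx0]
          simp
        · have hvx : v.val = x + e0 := by rw [hv]
          rw [hvx]
          simp only [Pi.add_apply, hx0, e0i0, zero_add]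
          rw [← he0def, add_assoc, addself e0, add_zero]
      · rw [dif_neg hx, mem_singleton] at hv
        have hx' : x = 0 := by
          by_contra h
          exact hx ⟨h, hx0⟩
        have hvx : v.val = e0 := by rw [hv]
        rw [hvx, e0i0, ← he0def, addself e0, hx']
    have hgcard : ∀ x ∈ D, (1 ≤ (g x).card ∧ (g x).card ≤ 2) ∧
        ∑ v ∈ g x, v.val = e0 := by
      intro x hxD
      have hx0 : x i0 = 0 := (mem_filter.mp hxD).2
      simp only [hg]
      by_cases hx : x ≠ 0 ∧ x i0 = 0
      · rw [dif_pos hx]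
        have hne : (⟨x, hx.1⟩ : {v : Fin k → ZMod 2 // v ≠ 0}) ≠ ⟨x + e0, hne0 x hx.2⟩ := by
          intro h
          have h1 : x = x + e0 := congrArg Subtype.val h
          have h2 : e0 = 0 := left_eq_add.mp h1
          exact e0ne h2
        rw [Finset.card_pair hne, Finset.sum_pair hne]
        refine ⟨⟨by norm_num, le_refl 2⟩, ?_⟩
        rw [← add_assoc, addself x, zero_add]
      · rw [dif_neg hx]
        simp
    have hinj : Set.InjOn g D := by
      intro x hx y hy hxy
      obtain ⟨v, hv⟩ : ∃ v, v ∈ g x := by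
        have h1 := ((hgcard x hx).1).1
        exact Finset.card_pos.mp (by omega)
      have h1 := key x hx v hv
      have h2 := key y hy v (hxy ▸ hv)
      rw [h1, h2]
    have hfc0 : (univ.filter fun x : Fin k → ZMod 2 => x i0 = 0).card = 2 ^ (k - 1) :=
      (fiber_card hk _ (fun x y => rfl) e0 e0i0).1
    have hGScard : GS.card = 2 ^ (k - 1) := by
      rw [hGS, Finset.card_image_of_injOn hinj, hD]
      exact hfc0
    refine ⟨fun i => if i = i0 then (2 : ℝ) ^ (k - 1) else 0, ?_, ?_⟩
    · refine ⟨fun i S => if i = i0 ∧ S ∈ GS then 1 else 0, ?_, ?_, ?_, ?_⟩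
      · intro i S; dsimp only; split <;> norm_num
      · intro i S hw
        have hcond : i = i0 ∧ S ∈ GS := by
          by_contra h
          exact hw (by dsimp only; exact if_neg h)
        obtain ⟨x, hxD, hgx⟩ := Finset.mem_image.mp hcond.2
        obtain ⟨⟨hc1, hc2⟩, hcs⟩ := hgcard x hxD
        rw [← hgx]
        exact ⟨hc1, hc2, by rw [hcond.1, ← he0def]; exact hcs⟩
      · intro i
        dsimp only
        by_cases hi : i = i0
        · subst hi
          simp only [eq_self_iff_true, true_and, if_true]
          rw [Finset.sum_boole]
          have hfix : (univ.filter fun S => S ∈ GS) = GS := by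
            ext S; simp
          rw [hfix, hGScard]
          push_cast
          ring
        · simp [hi]
      · intro v
        dsimp only
        have hswap : (∑ i, ∑ S ∈ univ.filter (fun S => v ∈ S),
            (if i = i0 ∧ S ∈ GS then (1:ℝ) else 0)) =
            ∑ S ∈ univ.filter (fun S => v ∈ S), ∑ i,
            (if i = i0 ∧ S ∈ GS then (1:ℝ) else 0) := Finset.sum_comm
        rw [hswap]
        have hinner : ∀ S, (∑ i, if i = i0 ∧ S ∈ GS then (1:ℝ) else 0) =
            if S ∈ GS then 1 else 0 := by
          intro S
          by_cases hS : S ∈ GS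
          · simp [hS, Finset.sum_ite_eq']
          · simp [hS]
        rw [Finset.sum_congr rfl (fun S _ => hinner S)]
        rw [Finset.sum_ite, Finset.sum_const, Finset.sum_const, smul_zero, add_zero,
          Finset.filter_filter]
        have hcard1 : ((univ.filter fun S => v ∈ S ∧ S ∈ GS)).card ≤ 1 := by
          rw [Finset.card_le_one]
          intro S1 h1 S2 h2
          simp only [mem_filter, mem_univ, true_and] at h1 h2
          obtain ⟨x1, hx1, hg1⟩ := Finset.mem_image.mp h1.2
          obtain ⟨x2, hx2, hg2⟩ := Finset.mem_image.mp h2.2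
          have e1 := key x1 hx1 v (by rw [hg1]; exact h1.1)
          have e2 := key x2 hx2 v (by rw [hg2]; exact h2.1)
          rw [← hg1, ← hg2, e1, e2]
        calc ((univ.filter fun S => v ∈ S ∧ S ∈ GS)).card • (1:ℝ)
            = ((univ.filter fun S => v ∈ S ∧ S ∈ GS)).card := by simp
          _ ≤ 1 := by exact_mod_cast hcard1
    · rw [Finset.sum_ite_eq' univ i0 (fun _ => (2:ℝ) ^ (k - 1))]
      simp
  · -- upper bound
    rintro s ⟨lam, ⟨w, hw0, hw1, hw2, hw3⟩, rfl⟩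
    set T : Finset {v : Fin k → ZMod 2 // v ≠ 0} :=
      univ.filter (fun v => (∑ j, v.val j) = 1) with hT
    have hodd : ∀ i S, w i S ≠ 0 → ∃ v ∈ S, v ∈ T := by
      intro i S hw
      obtain ⟨-, -, hsum⟩ := hw1 i S hw
      have hpar : ∑ v ∈ S, ∑ j, v.val j = 1 := by
        have hc := congrArg (fun f : Fin k → ZMod 2 => ∑ j, f j) hsum
        rw [Finset.sum_pi_single' i (1 : ZMod 2) univ, if_pos (mem_univ i)] at hc
        rw [← hc, Finset.sum_comm]
        apply Finset.sum_congr rfl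
        intro j _
        rw [Finset.sum_apply]
      by_contra h
      push_neg at h
      have hz : ∀ v ∈ S, (∑ j, v.val j) = 0 := by
        intro v hv
        rcases zmod2_cases (∑ j, v.val j) with h0 | h1
        · exact h0
        · exact absurd (mem_filter.mpr ⟨mem_univ v, h1⟩) (h v hv)
      rw [Finset.sum_eq_zero hz] at hpar
      exact absurd hpar (by decide)
    have step : ∀ i S, w i S ≤ ∑ v ∈ T, (if v ∈ S then w i S else 0) := by
      intro i S
      by_cases hw : w i S = 0
      · rw [hw]
        apply Finset.sum_nonneg
        intro v _
        simp
      · obtain ⟨v0, hv0S, hv0T⟩ := hodd i S hw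
        have hnn : ∀ v ∈ T, 0 ≤ (fun v => if v ∈ S then w i S else 0) v := by
          intro v _; dsimp only; split
          · exact hw0 i S
          · exact le_refl 0
        have hle := Finset.single_le_sum hnn hv0T
        simpa [hv0S] using hle
    have haddp : ∀ x y : Fin k → ZMod 2, (∑ j, (x + y) j) = (∑ j, x j) + (∑ j, y j) := by
      intro x y
      simp [Finset.sum_add_distrib]
    have hpe0 : (∑ j, e0 j) = 1 := by
      rw [he0def, Finset.sum_pi_single' i0 (1 : ZMod 2) univ, if_pos (mem_univ i0)]
    have hfc1 : (univ.filter fun x : Fin k → ZMod 2 => (∑ j, x j) = 1).card = 2 ^ (k - 1) :=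
      (fiber_card hk _ haddp e0 hpe0).2
    have hTcard : T.card ≤ 2 ^ (k - 1) := by
      have hle : T.card ≤ (univ.filter fun x : Fin k → ZMod 2 => (∑ j, x j) = 1).card := by
        apply Finset.card_le_card_of_injOn Subtype.val
        · intro v hv
          simp only [hT, mem_coe, mem_filter, mem_univ, true_and] at hv ⊢
          exact hv
        · intro a _ b _ hab
          exact Subtype.ext hab
      exact hle.trans_eq hfc1
    calc ∑ i, lam i = ∑ i, ∑ S, w i S := by
          apply Finset.sum_congr rfl; intro i _; rw [hw2 i]
      _ ≤ ∑ i, ∑ S, ∑ v ∈ T, (if v ∈ S then w i S else 0) := by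
          apply Finset.sum_le_sum; intro i _
          apply Finset.sum_le_sum; intro S _
          exact step i S
      _ = ∑ i, ∑ v ∈ T, ∑ S, (if v ∈ S then w i S else 0) :=
          Finset.sum_congr rfl (fun i _ => Finset.sum_comm)
      _ = ∑ v ∈ T, ∑ i, ∑ S, (if v ∈ S then w i S else 0) := Finset.sum_comm
      _ = ∑ v ∈ T, ∑ i, ∑ S ∈ univ.filter (fun S => v ∈ S), w i S := by
          apply Finset.sum_congr rfl; intro v _
          apply Finset.sum_congr rfl; intro i _
          rw [Finset.sum_filter]
      _ ≤ ∑ v ∈ T, 1 := Finset.sum_le_sum (fun v _ => hw3 v)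
      _ = T.card := by rw [Finset.sum_const, nsmul_eq_mul, mul_one]
      _ ≤ 2 ^ (k - 1) := by exact_mod_cast hTcard
end

section
/- Suppose the integral service rate region of a linear [n,k]_q code (with unit server rates) contains every vector λ ∈ ℤ_{≥0}^k with Σ_i λ_i = t. Then for every multiset {i_1,…,i_t} of indices from [k], there exist t pairwise disjoint subsets T_1,…,T_t of column indices of the generator matrix G such that for each j, some linear combination of the columns of G indexed by T_j equals the standard basis vector e_{i_j}; i.e., G is an [n,k,t]_q multiset primitive batch code. -/
open Finset

/-- `T` is a recovery set for file `i`: some linear combination with nonzero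
coefficients of the columns of `G` indexed by `T` equals `e_i`. -/
def IsRecoverySet (F : Type) [Field F] (k n : ℕ) (G : Matrix (Fin k) (Fin n) F)
    (i : Fin k) (T : Finset (Fin n)) : Prop :=
  ∃ c : Fin n → F, (∀ l ∈ T, c l ≠ 0) ∧
    (∑ l ∈ T, c l • (fun r => G r l)) = Pi.single i 1

/-- `lam` is in the integral service rate region of the code generated by `G`
with unit server rates. -/
def IntServableCode (F : Type) [Field F] (k n : ℕ) (G : Matrix (Fin k) (Fin n) F)
    (lam : Fin k → ℕ) : Prop :=
  ∃ w : Fin k → Finset (Fin n) → ℕ,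
    (∀ i T, w i T ≠ 0 → IsRecoverySet F k n G i T) ∧
    (∀ i, ∑ T : Finset (Fin n), w i T = lam i) ∧
    ∀ l : Fin n, (∑ i, ∑ T ∈ Finset.univ.filter (fun T : Finset (Fin n) => l ∈ T), w i T) ≤ 1

theorem intServable_implies_batch_code (F : Type) [Field F] (k n τ : ℕ)
    (G : Matrix (Fin k) (Fin n) F)
    (h : ∀ lam : Fin k → ℕ, ∑ i, lam i = τ → IntServableCode F k n G lam) :
    ∀ f : Fin τ → Fin k, ∃ T : Fin τ → Finset (Fin n),
      (∀ j j', j ≠ j' → Disjoint (T j) (T j')) ∧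
      ∀ j, ∃ c : Fin n → F, (∑ l ∈ T j, c l • (fun r => G r l)) = Pi.single (f j) 1 := by
  intro f
  classical
  set lam : Fin k → ℕ := fun i => (univ.filter (fun j => f j = i)).card with hlam
  have hsum : ∑ i, lam i = τ := by
    rw [← Fintype.card_fin τ, ← Finset.card_univ]
    exact (Finset.card_eq_sum_card_fiberwise (fun j _ => mem_univ (f j))).symm
  obtain ⟨w, hw1, hw2, hw3⟩ := h lam hsum
  have hT_ne : ∀ i T, w i T ≠ 0 → T.Nonempty := by
    intro i T hT
    rcases Finset.eq_empty_or_nonempty T with rfl | hne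
    · obtain ⟨c, -, hc⟩ := hw1 i ∅ hT
      simp only [Finset.sum_empty] at hc
      have := congrFun hc.symm i
      simp at this
    · exact hne
  have hw_le : ∀ i T, w i T ≤ 1 := by
    intro i T
    by_cases hT : w i T = 0
    · omega
    obtain ⟨l, hl⟩ := hT_ne i T hT
    calc w i T ≤ ∑ T' ∈ univ.filter (fun T' : Finset (Fin n) => l ∈ T'), w i T' :=
          Finset.single_le_sum (fun _ _ => Nat.zero_le _) (by simp [hl])
      _ ≤ ∑ i', ∑ T' ∈ univ.filter (fun T' : Finset (Fin n) => l ∈ T'), w i' T' :=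
          Finset.single_le_sum
            (f := fun i' => ∑ T' ∈ univ.filter (fun T' : Finset (Fin n) => l ∈ T'), w i' T')
            (fun _ _ => Nat.zero_le _) (mem_univ i)
      _ ≤ 1 := hw3 l
  have hdisj : ∀ i i' T T', w i T ≠ 0 → w i' T' ≠ 0 → (i ≠ i' ∨ T ≠ T') →
      Disjoint T T' := by
    intro i i' T T' hT hT' hne
    rw [Finset.disjoint_left]
    intro l hlT hlT'
    have h3 := hw3 l
    by_cases hii : i = i'
    · subst hii
      have hTT' : T ≠ T' := hne.resolve_left (fun hc => hc rfl)
      have h1 : w i T + w i T' ≤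
          ∑ T'' ∈ univ.filter (fun T'' : Finset (Fin n) => l ∈ T''), w i T'' := by
        rw [← Finset.sum_pair hTT']
        apply Finset.sum_le_sum_of_subset
        intro x hx
        simp only [Finset.mem_insert, Finset.mem_singleton] at hx
        rcases hx with rfl | rfl <;> simp [hlT, hlT']
      have h2 : (∑ T'' ∈ univ.filter (fun T'' : Finset (Fin n) => l ∈ T''), w i T'')
          ≤ ∑ i'', ∑ T'' ∈ univ.filter (fun T'' : Finset (Fin n) => l ∈ T''), w i'' T'' :=
        Finset.single_le_sum
          (f := fun i'' => ∑ T'' ∈ univ.filter (fun T'' : Finset (Fin n) => l ∈ T''), w i'' T'')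
          (fun _ _ => Nat.zero_le _) (mem_univ i)
      omega
    · have hiT : w i T ≤ ∑ T'' ∈ univ.filter (fun T'' : Finset (Fin n) => l ∈ T''), w i T'' :=
        Finset.single_le_sum (fun _ _ => Nat.zero_le _) (by simp [hlT])
      have hiT' : w i' T' ≤ ∑ T'' ∈ univ.filter (fun T'' : Finset (Fin n) => l ∈ T''), w i' T'' :=
        Finset.single_le_sum (fun _ _ => Nat.zero_le _) (by simp [hlT'])
      have h1 : (∑ T'' ∈ univ.filter (fun T'' : Finset (Fin n) => l ∈ T''), w i T'')
          + (∑ T'' ∈ univ.filter (fun T'' : Finset (Fin n) => l ∈ T''), w i' T'')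
          ≤ ∑ i'', ∑ T'' ∈ univ.filter (fun T'' : Finset (Fin n) => l ∈ T''), w i'' T'' := by
        rw [← Finset.sum_pair (f := fun i'' =>
          ∑ T'' ∈ univ.filter (fun T'' : Finset (Fin n) => l ∈ T''), w i'' T'') hii]
        exact Finset.sum_le_sum_of_subset (Finset.subset_univ _)
      omega
  set S : Fin k → Finset (Finset (Fin n)) := fun i => univ.filter (fun T => w i T ≠ 0) with hS
  have hcard : ∀ i, (univ.filter (fun j => f j = i)).card = (S i).card := by
    intro i
    have h1 : ∑ T ∈ S i, w i T = lam i := by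
      rw [hS]
      rw [Finset.sum_filter_ne_zero]
      exact hw2 i
    have h2 : ∑ T ∈ S i, w i T = (S i).card := by
      rw [Finset.card_eq_sum_ones]
      apply Finset.sum_congr rfl
      intro T hT
      simp only [hS, Finset.mem_filter] at hT
      have := hw_le i T
      omega
    have h1' : lam i = (S i).card := by omega
    simpa [hlam] using h1'
  let E : ∀ i, {j // j ∈ univ.filter (fun j => f j = i)} ≃ {T // T ∈ S i} :=
    fun i => Finset.equivOfCardEq (hcard i)
  let Tf : ∀ (i : Fin k) (j : Fin τ), f j = i → Finset (Fin n) :=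
    fun i j hj => (E i ⟨j, by simp [hj]⟩ : {T // T ∈ S i}).1
  have Tf_congr : ∀ {i i'} (hii : i = i') (j) (hj : f j = i) (hj' : f j = i'),
      Tf i j hj = Tf i' j hj' := by
    intro i i' hii j hj hj'
    subst hii
    rfl
  have Tf_mem : ∀ (i : Fin k) (j : Fin τ) (hj : f j = i), w i (Tf i j hj) ≠ 0 := by
    intro i j hj
    have := (E i ⟨j, by simp [hj]⟩ : {T // T ∈ S i}).2
    simp only [hS, Finset.mem_filter] at this
    exact this.2
  refine ⟨fun j => Tf (f j) j rfl, ?_, ?_⟩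
  · intro j j' hjj'
    by_cases hf : f j = f j'
    · refine hdisj (f j) (f j') _ _ (Tf_mem _ _ rfl) (Tf_mem _ _ rfl) (Or.inr ?_)
      show Tf (f j) j rfl ≠ Tf (f j') j' rfl
      rw [Tf_congr hf.symm j' rfl hf.symm]
      intro hc
      have hval : (E (f j) ⟨j, by simp⟩ : {T // T ∈ S (f j)}).1
          = (E (f j) ⟨j', by simp [hf]⟩ : {T // T ∈ S (f j)}).1 := hc
      have := (E (f j)).injective (Subtype.ext hval)
      exact hjj' (congrArg Subtype.val this)
    · exact hdisj (f j) (f j') _ _ (Tf_mem _ _ rfl) (Tf_mem _ _ rfl) (Or.inl hf)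
  · intro j
    obtain ⟨c, -, hc⟩ := hw1 (f j) _ (Tf_mem (f j) j rfl)
    exact ⟨c, hc⟩
end
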